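/- Let f : ℝ^d → ℝ be differentiable, μ-strongly convex and L-smooth with 0 < μ ≤ L, and let x* be a minimizer of f over the ℓ1 ball B_τ = {x : ‖x‖₁ ≤ τ}. Let η ∈ [0,1], let x ∈ B_τ, and let x̃ ∈ ℝ^d satisfy ⟨∇f(x), x̃⟩ + (Lη/2)‖x̃ − x‖² ≤ ⟨∇f(x), x*⟩ + (Lη/2)‖x* − x‖². Then the point x⁺ = (1 − η)x + η x̃ satisfies f(x⁺) − f(x*) ≤ (1 − η + (L/μ)η²)(f(x) − f(x*)). -/

import Mathlib

open RealInnerProductSpace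

theorem stmt_0 {d : ℕ} (f : EuclideanSpace ℝ (Fin d) → ℝ)
    (f' : EuclideanSpace ℝ (Fin d) → EuclideanSpace ℝ (Fin d))
    (μ L τ : ℝ) (hμ : 0 < μ) (hμL : μ ≤ L)
    (hdiff : ∀ x, HasGradientAt f (f' x) x)
    (hsc : ∀ u v, f u + ⟪f' u, v - u⟫ + μ / 2 * ‖v - u‖ ^ 2 ≤ f v)
    (hsm : ∀ u v, f v ≤ f u + ⟪f' u, v - u⟫ + L / 2 * ‖v - u‖ ^ 2)
    (xstar : EuclideanSpace ℝ (Fin d))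
    (hxstar : ∑ i, |xstar i| ≤ τ)
    (hmin : ∀ x : EuclideanSpace ℝ (Fin d), (∑ i, |x i| ≤ τ) → f xstar ≤ f x)
    (η : ℝ) (hη0 : 0 ≤ η) (hη1 : η ≤ 1)
    (x : EuclideanSpace ℝ (Fin d)) (hx : ∑ i, |x i| ≤ τ)
    (xtil : EuclideanSpace ℝ (Fin d))
    (hxt : ⟪f' x, xtil⟫ + L * η / 2 * ‖xtil - x‖ ^ 2 ≤
      ⟪f' x, xstar⟫ + L * η / 2 * ‖xstar - x‖ ^ 2) :
    f ((1 - η) • x + η • xtil) - f xstar ≤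
      (1 - η + L / μ * η ^ 2) * (f x - f xstar) := by
  have hL : 0 < L := lt_of_lt_of_le hμ hμL
  set g : ℝ := ⟪f' xstar, x - xstar⟫ with hg
  set c : ℝ := ‖x - xstar‖ ^ 2 with hc
  have hc0 : 0 ≤ c := by rw [hc]; positivity
  clear_value g c
  -- segment feasibility and smoothness give: 0 ≤ t*g + L/2*t^2*c for t ∈ (0,1]
  have hseg : ∀ t : ℝ, 0 < t → t ≤ 1 → 0 ≤ t * g + L / 2 * t ^ 2 * c := by
    intro t ht0 ht1
    have h1t : (0:ℝ) ≤ 1 - t := by linarith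
    have hfeas : ∑ i, |(xstar + t • (x - xstar)) i| ≤ τ := by
      calc ∑ i, |(xstar + t • (x - xstar)) i|
          ≤ ∑ i, ((1 - t) * |xstar i| + t * |x i|) := by
            apply Finset.sum_le_sum
            intro i _
            have he : (xstar + t • (x - xstar)) i = (1 - t) * xstar i + t * x i := by
              simp [PiLp.add_apply, PiLp.smul_apply, PiLp.sub_apply, smul_eq_mul]
              ring
            rw [he]
            calc |(1 - t) * xstar i + t * x i|
                ≤ |(1 - t) * xstar i| + |t * x i| := abs_add_le _ _
              _ = (1 - t) * |xstar i| + t * |x i| := by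
                  rw [abs_mul, abs_mul, abs_of_nonneg h1t, abs_of_nonneg ht0.le]
        _ = (1 - t) * (∑ i, |xstar i|) + t * (∑ i, |x i|) := by
            rw [Finset.sum_add_distrib, ← Finset.mul_sum, ← Finset.mul_sum]
        _ ≤ (1 - t) * τ + t * τ := by gcongr
        _ = τ := by ring
    have h1 := hmin _ hfeas
    have h2 := hsm xstar (xstar + t • (x - xstar))
    have h3 : (xstar + t • (x - xstar)) - xstar = t • (x - xstar) := by
      abel
    rw [h3, real_inner_smul_right] at h2
    have h4 : ‖t • (x - xstar)‖ ^ 2 = t ^ 2 * c := by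
      rw [norm_smul, Real.norm_eq_abs, abs_of_pos ht0, mul_pow, hc]
    rw [h4, ← hg] at h2
    linarith
  -- first-order optimality: g ≥ 0
  have hg0 : 0 ≤ g := by
    by_contra hneg
    push_neg at hneg
    rcases eq_or_lt_of_le hc0 with hceq | hcpos
    · have := hseg 1 one_pos le_rfl
      nlinarith
    · set t0 : ℝ := -g / (L * c) with ht0def
      have ht0pos : 0 < t0 := div_pos (by linarith) (by positivity)
      set t : ℝ := min 1 t0 with htdef
      have htpos : 0 < t := lt_min one_pos ht0pos
      have htle1 : t ≤ 1 := min_le_left _ _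
      have htlet0 : t ≤ t0 := min_le_right _ _
      have key := hseg t htpos htle1
      have hmul : L * c * t0 = -g := by
        rw [ht0def]
        field_simp
      have h5 : L / 2 * t ^ 2 * c ≤ L / 2 * t * t0 * c := by
        nlinarith [mul_nonneg (mul_pos (mul_pos hL hcpos) htpos).le (sub_nonneg.mpr htlet0)]
      nlinarith [mul_pos htpos (neg_pos.mpr hneg)]
  have hD : 0 ≤ f x - f xstar := by linarith [hmin x hx]
  have hsc1 := hsc xstar x
  have hc2 : μ * c ≤ 2 * (f x - f xstar) := by
    rw [← hg, ← hc] at hsc1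
    linarith
  -- smoothness step for the update
  have hstep : f ((1 - η) • x + η • xtil) ≤
      f x - η * (f x - f xstar) + (L * η ^ 2 / 2 - η * μ / 2) * c := by
    have hsm1 := hsm x ((1 - η) • x + η • xtil)
    have hdiffv : ((1 - η) • x + η • xtil) - x = η • (xtil - x) := by
      module
    rw [hdiffv, real_inner_smul_right] at hsm1
    have hnorm : ‖η • (xtil - x)‖ ^ 2 = η ^ 2 * ‖xtil - x‖ ^ 2 := by
      rw [norm_smul, Real.norm_eq_abs, abs_of_nonneg hη0, mul_pow]
    rw [hnorm] at hsm1
    have hin1 : ⟪f' x, xtil - x⟫ = ⟪f' x, xtil⟫ - ⟪f' x, x⟫ := inner_sub_right _ _ _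
    have hin2 : ⟪f' x, xstar - x⟫ = ⟪f' x, xstar⟫ - ⟪f' x, x⟫ := inner_sub_right _ _ _
    have hsc2 := hsc x xstar
    have hnr : ‖xstar - x‖ ^ 2 = c := by rw [hc, norm_sub_rev]
    rw [hin1] at hsm1
    rw [hin2, hnr] at hsc2
    have hxt' := mul_le_mul_of_nonneg_left hxt hη0
    rw [hnr] at hxt'
    have hsc2' := mul_le_mul_of_nonneg_left hsc2 hη0
    linarith [hsm1, hxt', hsc2']
  -- combine
  set A : ℝ := f ((1 - η) • x + η • xtil) with hA
  set B : ℝ := f x with hB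
  set C : ℝ := f xstar with hC
  clear_value A B C
  clear hdiff hsc hsm hmin hseg hsc1 hxt hg hc hA hB hC hxstar hx hg0
  rw [← mul_le_mul_iff_of_pos_right hμ]
  have hexp : (1 - η + L / μ * η ^ 2) * (B - C) * μ =
      ((1 - η) * μ + L * η ^ 2) * (B - C) := by
    field_simp
  rw [hexp]
  rcases le_or_gt (L * η) μ with hcase | hcase
  · nlinarith [mul_le_mul_of_nonneg_left hstep hμ.le,
      mul_nonneg (mul_nonneg hμ.le hη0) (mul_nonneg (sub_nonneg.mpr hcase) hc0),
      mul_nonneg (mul_nonneg hL.le (sq_nonneg η)) hD]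
  · nlinarith [mul_le_mul_of_nonneg_left hstep hμ.le,
      mul_le_mul_of_nonneg_left hc2 (mul_nonneg hη0 (by linarith : (0:ℝ) ≤ L * η - μ)),
      mul_nonneg (mul_nonneg hμ.le hη0) hD]
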